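/- Let A be a unital C*-algebra and let E ⊆ A be a selfadjoint subspace that generates A and is separating for A (every positive functional on A vanishing on E is zero). Then the set 𝔎 := { φ : E → ℂ continuous linear | there exists a positive functional ψ on A with ψ|_E = φ } is closed in the weak-* topology of the continuous dual of E (the topology of pointwise convergence on E). (This is the scalar-valued case, K = ℂ, of the closedness of the set of extendable completely bounded completely positive maps in the point-weak-* topology.) -/

import Mathlib

open scoped ComplexOrder Topology

noncomputable section

section Aux

variable {A : Type*} [CStarAlgebra A] [PartialOrder A] [StarOrderedRing A]

lemma pos_real (ψ : A →L[ℂ] ℂ) (hψ : ∀ a : A, 0 ≤ a → 0 ≤ ψ a) {h : A}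
    (hh : IsSelfAdjoint h) : (starRingEnd ℂ) (ψ h) = ψ h := by
  have h1 := hψ _ (CFC.posPart_nonneg h)
  have h2 := hψ _ (CFC.negPart_nonneg h)
  rw [Complex.le_def] at h1 h2
  have : ψ h = ψ h⁺ - ψ h⁻ := by rw [← map_sub, CFC.posPart_sub_negPart h hh]
  rw [this, Complex.ext_iff]
  constructor <;> simp [Complex.conj_re, Complex.conj_im, ← h1.2, ← h2.2]

lemma pos_star (ψ : A →L[ℂ] ℂ) (hψ : ∀ a : A, 0 ≤ a → 0 ≤ ψ a) (a : A) :
    ψ (star a) = (starRingEnd ℂ) (ψ a) := by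
  set h := (2⁻¹ : ℂ) • (a + star a) with hh
  set k := (-(Complex.I) / 2) • (a - star a) with hk
  have hsa : IsSelfAdjoint h := by
    simp [IsSelfAdjoint, hh, star_smul, star_add, add_comm, Complex.ext_iff]
  have ksa : IsSelfAdjoint k := by
    rw [IsSelfAdjoint, hk, star_smul, star_sub, star_star]
    rw [show (star (-Complex.I / 2) : ℂ) = Complex.I / 2 from by simp,
      show star a - a = (-1 : ℂ) • (a - star a) from by rw [neg_smul, one_smul, neg_sub],
      smul_smul]
    congr 1
    ring
  have hdec : a = h + Complex.I • k := by
    rw [hh, hk, smul_smul]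
    rw [show Complex.I * (-(Complex.I)/2) = (2⁻¹ : ℂ) from by simp [Complex.ext_iff]; norm_num]
    rw [← smul_add, show a + star a + (a - star a) = (2 : ℂ) • a from by rw [two_smul]; abel,
      smul_smul]
    norm_num
  have hdecs : star a = h - Complex.I • k := by
    nth_rewrite 1 [hdec]
    rw [star_add, hsa.star_eq, star_smul, ksa.star_eq]
    simp [sub_eq_add_neg]
  rw [hdecs, hdec]
  simp only [map_add, map_sub, map_smul, smul_eq_mul, map_mul]
  rw [pos_real ψ hψ hsa, pos_real ψ hψ ksa, Complex.conj_I]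
  ring

lemma pos_one_nonneg (ψ : A →L[ℂ] ℂ) (hψ : ∀ a : A, 0 ≤ a → 0 ≤ ψ a) : 0 ≤ (ψ 1).re :=
  (Complex.le_def.mp (hψ 1 (by simpa using star_mul_self_nonneg (1 : A)))).1

lemma pos_norm_bound (ψ : A →L[ℂ] ℂ) (hψ : ∀ a : A, 0 ≤ a → 0 ≤ ψ a) (a : A) :
    ‖ψ a‖ ≤ (ψ 1).re * ‖a‖ := by
  letI c : PreInnerProductSpace.Core ℂ A :=
  { inner := fun x y => ψ (star x * y)
    conj_inner_symm := fun x y => by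
      show (starRingEnd ℂ) (ψ (star y * x)) = ψ (star x * y)
      rw [← pos_star ψ hψ, star_mul, star_star]
    re_inner_nonneg := fun x => (Complex.le_def.mp (hψ _ (star_mul_self_nonneg x))).1
    add_left := fun x y z => by simp [star_add, add_mul]
    smul_left := fun x y r => by simp [star_smul, smul_mul_assoc] }
  have key := @InnerProductSpace.Core.inner_mul_inner_self_le ℂ A _ _ _ c 1 a
  have e1 : (@inner ℂ A (InnerProductSpace.Core.toPreInner' (c := c)) 1 a) = ψ a := by
    show ψ (star 1 * a) = ψ a
    rw [star_one, one_mul]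
  have e2 : (@inner ℂ A (InnerProductSpace.Core.toPreInner' (c := c)) a 1) = (starRingEnd ℂ) (ψ a) := by
    show ψ (star a * 1) = _
    rw [mul_one, pos_star ψ hψ]
  have e3 : (@inner ℂ A (InnerProductSpace.Core.toPreInner' (c := c)) 1 1) = ψ 1 := by
    show ψ (star 1 * 1) = ψ 1
    rw [star_one, one_mul]
  have e4 : (@inner ℂ A (InnerProductSpace.Core.toPreInner' (c := c)) a a) = ψ (star a * a) := rfl
  rw [e1, e2, e3, e4, RCLike.norm_conj] at key
  -- bound on ψ (star a * a)
  have hle : star a * a ≤ algebraMap ℝ A (‖a‖ ^ 2) := CStarAlgebra.star_mul_le_algebraMap_norm_sq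
  have h0 : 0 ≤ ψ (algebraMap ℝ A (‖a‖ ^ 2) - star a * a) := hψ _ (by rwa [sub_nonneg])
  have halg : ψ (algebraMap ℝ A (‖a‖ ^ 2)) = ((‖a‖ ^ 2 : ℝ) : ℂ) * ψ 1 := by
    rw [IsScalarTower.algebraMap_apply ℝ ℂ A, Algebra.algebraMap_eq_smul_one, map_smul,
      smul_eq_mul]
    norm_num
  rw [map_sub, halg, Complex.le_def] at h0
  have h5 : (ψ (star a * a)).re ≤ ‖a‖ ^ 2 * (ψ 1).re := by
    have := h0.1
    simp only [Complex.zero_re, Complex.sub_re, Complex.mul_re, Complex.ofReal_re,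
      Complex.ofReal_im] at this
    nlinarith [this]
  simp only [RCLike.re_to_complex] at key
  have h6 := pos_one_nonneg ψ hψ
  nlinarith [key, norm_nonneg (ψ a), norm_nonneg a, mul_nonneg h6 (norm_nonneg a),
    sq_nonneg (‖ψ a‖ - (ψ 1).re * ‖a‖), sq_nonneg (‖ψ a‖ + (ψ 1).re * ‖a‖)]

lemma nonneg_of_dist {y : A} (hy : IsSelfAdjoint y) {t : ℝ}
    (h : ‖y - algebraMap ℝ A t‖ ≤ t) : 0 ≤ y := by
  by_cases htriv : Subsingleton A
  · exact le_of_eq (Subsingleton.elim 0 y)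
  have : Nontrivial A := not_subsingleton_iff_nontrivial.mp htriv
  rw [StarOrderedRing.nonneg_iff_spectrum_nonneg (R := ℝ) y hy]
  intro x hx
  have hx' : x - t ∈ spectrum ℝ (y - algebraMap ℝ A t) := by
    rw [← spectrum.sub_singleton_eq]
    exact Set.sub_mem_sub hx rfl
  have h2 := spectrum.norm_le_norm_of_mem hx'
  have h3 : |x - t| ≤ t := le_trans (by simpa using h2) h
  linarith [(abs_le.mp h3).1]

lemma real_smul_nonneg {t : ℝ} (ht : 0 ≤ t) {p : A} (hp : 0 ≤ p) : 0 ≤ (t : ℝ) • p := by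
  have key := star_left_conjugate_nonneg hp (((Real.sqrt t : ℝ) : ℂ) • (1 : A))
  have h1 : star (((Real.sqrt t : ℝ) : ℂ) • (1 : A)) = ((Real.sqrt t : ℝ) : ℂ) • (1 : A) := by
    rw [star_smul, star_one, RCLike.star_def, Complex.conj_ofReal]
  rw [h1, smul_mul_assoc, one_mul, mul_smul_comm, mul_one, smul_smul, ← Complex.ofReal_mul,
    Real.mul_self_sqrt ht] at key
  rwa [← algebraMap_smul ℂ t p, Complex.coe_algebraMap]

lemma exists_strict_pos (E : Submodule ℂ A) (hEstar : ∀ x ∈ E, star x ∈ E)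
    (hsep : ∀ ψ : A →L[ℂ] ℂ, (∀ a : A, 0 ≤ a → 0 ≤ ψ a) → (∀ x ∈ E, ψ x = 0) → ψ = 0) :
    ∃ e ∈ E, IsSelfAdjoint e ∧ ∃ ε : ℝ, 0 < ε ∧ algebraMap ℝ A ε ≤ e := by
  by_contra hcon
  push_neg at hcon
  -- the open convex set of elements `p + b` with `p ≥ 0`, `‖b - 1‖ < 1`
  set s : Set A := {x | ∃ p : A, 0 ≤ p ∧ ‖x - p - 1‖ < 1} with hs
  have hs_open : IsOpen s := by
    rw [Metric.isOpen_iff]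
    rintro x ⟨p, hp, hx⟩
    refine ⟨1 - ‖x - p - 1‖, by linarith, fun y hy => ⟨p, hp, ?_⟩⟩
    rw [Metric.mem_ball, dist_eq_norm] at hy
    calc ‖y - p - 1‖ = ‖(y - x) + (x - p - 1)‖ := by abel_nf
      _ ≤ ‖y - x‖ + ‖x - p - 1‖ := norm_add_le _ _
      _ < 1 := by linarith
  have hs_conv : Convex ℝ s := by
    rintro x ⟨p, hp, hx⟩ y ⟨q, hq, hy⟩ α β hα hβ hαβ
    obtain rfl : β = 1 - α := by linarith
    refine ⟨α • p + (1 - α) • q,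
      add_nonneg (real_smul_nonneg hα hp) (real_smul_nonneg hβ hq), ?_⟩
    have heq : α • x + (1 - α) • y - (α • p + (1 - α) • q) - 1
        = α • (x - p - 1) + (1 - α) • (y - q - 1) := by module
    rw [heq]
    rcases eq_or_lt_of_le hα with h0 | h0
    · rw [← h0]
      simpa using hy
    · calc ‖α • (x - p - 1) + (1 - α) • (y - q - 1)‖
          ≤ α * ‖x - p - 1‖ + (1 - α) * ‖y - q - 1‖ := by
            refine le_trans (norm_add_le _ _) ?_
            rw [norm_smul, norm_smul, Real.norm_of_nonneg hα, Real.norm_of_nonneg hβ]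
        _ < 1 := by nlinarith
  -- s is disjoint from E
  have hdisj : Disjoint s (E : Set A) := by
    rw [Set.disjoint_left]
    rintro x ⟨p, hp, hx⟩ hxE
    obtain ⟨b, hb⟩ : ∃ b, b = x - p := ⟨_, rfl⟩
    rw [← hb] at hx
    obtain ⟨e, he⟩ : ∃ e, e = (2⁻¹ : ℂ) • (x + star x) := ⟨_, rfl⟩
    have heE : e ∈ E := he ▸ E.smul_mem _ (E.add_mem hxE (hEstar x hxE))
    have hpsa : star p = p := (IsSelfAdjoint.of_nonneg hp).star_eq
    have hesa : IsSelfAdjoint e := by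
      rw [IsSelfAdjoint, he, star_smul, star_add, star_star,
        show (star (2⁻¹ : ℂ)) = (2⁻¹ : ℂ) from by simp]
      module
    obtain ⟨bsa, hbsa⟩ : ∃ y, y = (2⁻¹ : ℂ) • (b + star b) := ⟨_, rfl⟩
    have hebsa : e = p + bsa := by
      rw [he, hbsa, hb, star_sub, hpsa]
      module
    have hbsasa : IsSelfAdjoint bsa := by
      rw [IsSelfAdjoint, hbsa, star_smul, star_add, star_star,
        show (star (2⁻¹ : ℂ)) = (2⁻¹ : ℂ) from by simp]
      module
    have hone : ‖(1 : A) - bsa‖ < 1 := by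
      have h1 : (1 : A) - bsa = (2⁻¹ : ℂ) • ((1 - b) + star (1 - b)) := by
        rw [hbsa, show star ((1:A) - b) = 1 - star b from by rw [star_sub, star_one]]
        module
      have h2 : ‖(1:A) - b‖ < 1 := by
        rw [show (1:A) - b = -(b - 1) from by abel, norm_neg]
        exact hx
      calc ‖(1:A) - bsa‖ ≤ ‖(2⁻¹:ℂ)‖ * (‖(1:A) - b‖ + ‖star ((1:A) - b)‖) := by
            rw [h1, norm_smul]
            exact mul_le_mul_of_nonneg_left (norm_add_le _ _) (norm_nonneg _)
        _ = ‖(1:A) - b‖ := by rw [norm_star]; simp; ring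
        _ < 1 := h2
    set ε : ℝ := 1 - ‖(1:A) - bsa‖ with hε
    have hεpos : 0 < ε := by rw [hε]; linarith
    have halgsa : ∀ t : ℝ, IsSelfAdjoint (algebraMap ℝ A t) := by
      intro t
      rw [IsSelfAdjoint, Algebra.algebraMap_eq_smul_one, ← algebraMap_smul ℂ,
        Complex.coe_algebraMap, star_smul, star_one, RCLike.star_def, Complex.conj_ofReal]
    have hkey : 0 ≤ bsa - algebraMap ℝ A ε := by
      refine nonneg_of_dist (t := ‖(1:A) - bsa‖) (hbsasa.sub (halgsa ε)) ?_
      have h3 : bsa - algebraMap ℝ A ε - algebraMap ℝ A ‖(1:A) - bsa‖ = bsa - 1 := by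
        rw [sub_sub, ← map_add, hε]
        norm_num
      rw [h3, ← norm_neg, neg_sub]
    have hfin : algebraMap ℝ A ε ≤ e := by
      rw [hebsa, ← sub_nonneg,
        show p + bsa - algebraMap ℝ A ε = p + (bsa - algebraMap ℝ A ε) from by abel]
      exact add_nonneg hp hkey
    exact hcon e heE hesa ε hεpos hfin
  -- separate `s` from `E` by a real functional
  have hEconv : Convex ℝ (E : Set A) := by
    intro x hx y hy α β hα hβ hαβ
    have h1 : α • x + β • y = (algebraMap ℝ ℂ α) • x + (algebraMap ℝ ℂ β) • y := by
      rw [algebraMap_smul, algebraMap_smul]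
    rw [SetLike.mem_coe]
    show α • x + β • y ∈ E
    rw [h1]
    exact E.add_mem (E.smul_mem _ hx) (E.smul_mem _ hy)
  obtain ⟨f, u, hfs, hfE⟩ := geometric_hahn_banach_open hs_conv hs_open hEconv hdisj
  have hfE0 : ∀ x ∈ E, f x = 0 := by
    intro x hxE
    by_contra hne
    have h1 := hfE (((u - 1) / f x : ℝ) • x)
      (by rw [← algebraMap_smul ℂ ((u - 1) / f x : ℝ) x]; exact E.smul_mem _ hxE)
    rw [map_smul, smul_eq_mul, div_mul_cancel₀ _ hne] at h1
    linarith
  have hu0 : u ≤ 0 := by simpa using hfE 0 E.zero_mem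
  have h1s : (1 : A) ∈ s := ⟨0, le_refl 0, by simp⟩
  have hf1 : f 1 < 0 := lt_of_lt_of_le (hfs 1 h1s) hu0
  have hfpos : ∀ p : A, 0 ≤ p → f p ≤ 0 := by
    intro p hp
    by_contra hfp
    push_neg at hfp
    have ht : (0:ℝ) ≤ (1 - f 1) / f p := div_nonneg (by linarith) hfp.le
    have hmem : ((1 - f 1)/f p : ℝ) • p + 1 ∈ s := by
      refine ⟨((1 - f 1)/f p : ℝ) • p, real_smul_nonneg ht hp, ?_⟩
      have h2 : ((1 - f 1)/f p : ℝ) • p + 1 - ((1 - f 1)/f p : ℝ) • p - 1 = 0 := by abel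
      rw [h2, norm_zero]
      norm_num
    have h3 := hfs _ hmem
    rw [map_add, map_smul, smul_eq_mul, div_mul_cancel₀ _ (ne_of_gt hfp)] at h3
    linarith
  obtain ⟨g, hg0, hgE, hg1⟩ : ∃ g : A →L[ℝ] ℝ,
      (∀ p : A, 0 ≤ p → 0 ≤ g p) ∧ (∀ x ∈ E, g x = 0) ∧ 0 < g 1 :=
    ⟨-f, fun p hp => by simpa using hfpos p hp, fun x hx => by simp [hfE0 x hx],
      by simpa using hf1⟩
  -- build a complex positive functional from `g`
  have hgreal : ∀ (r : ℝ) (x : A), g ((r : ℂ) • x) = r * g x := by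
    intro r x
    rw [show ((r : ℂ) • x) = r • x from by rw [← algebraMap_smul ℂ r x, Complex.coe_algebraMap],
      map_smul, smul_eq_mul]
  obtain ⟨T, hT⟩ : ∃ T : A → ℂ, T = fun a =>
      ((g ((2⁻¹ : ℂ) • (a + star a)) : ℝ) : ℂ)
        + Complex.I * ((g ((-(Complex.I)/2) • (a - star a)) : ℝ) : ℂ) := ⟨_, rfl⟩
  have hTadd : ∀ a b : A, T (a + b) = T a + T b := by
    intro a b
    have e1 : (2⁻¹ : ℂ) • ((a + b) + star (a + b))
        = (2⁻¹ : ℂ) • (a + star a) + (2⁻¹ : ℂ) • (b + star b) := by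
      rw [star_add]; module
    have e2 : (-(Complex.I)/2) • ((a + b) - star (a + b))
        = (-(Complex.I)/2) • (a - star a) + (-(Complex.I)/2) • (b - star b) := by
      rw [star_add]; module
    rw [hT]
    simp only [e1, e2, map_add]
    push_cast
    ring
  have hTI : ∀ a : A, T (Complex.I • a) = Complex.I * T a := by
    intro a
    have e1 : (2⁻¹ : ℂ) • (Complex.I • a + star (Complex.I • a))
        = -((-(Complex.I)/2) • (a - star a)) := by
      rw [star_smul, show (star Complex.I) = -Complex.I from by simp]
      module
    have e2 : (-(Complex.I)/2) • (Complex.I • a - star (Complex.I • a))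
        = (2⁻¹ : ℂ) • (a + star a) := by
      rw [star_smul, show (star Complex.I) = -Complex.I from by simp]
      match_scalars <;> simp [Complex.ext_iff] <;> ring
    rw [hT]
    simp only [e1, e2, map_neg]
    push_cast
    ring_nf
    rw [Complex.I_sq]
    ring
  have hTreal : ∀ (r : ℝ) (a : A), T ((r : ℂ) • a) = r * T a := by
    intro r a
    have e1 : (2⁻¹ : ℂ) • ((r : ℂ) • a + star ((r : ℂ) • a))
        = (r : ℂ) • ((2⁻¹ : ℂ) • (a + star a)) := by
      rw [star_smul, show (star (r : ℂ)) = (r : ℂ) from by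
        rw [RCLike.star_def, Complex.conj_ofReal]]
      module
    have e2 : (-(Complex.I)/2) • ((r : ℂ) • a - star ((r : ℂ) • a))
        = (r : ℂ) • ((-(Complex.I)/2) • (a - star a)) := by
      rw [star_smul, show (star (r : ℂ)) = (r : ℂ) from by
        rw [RCLike.star_def, Complex.conj_ofReal]]
      module
    rw [hT]
    simp only [e1, e2, hgreal]
    push_cast
    ring
  have hTsmul : ∀ (c : ℂ) (a : A), T (c • a) = c * T a := by
    intro c a
    have hdec : c • a = ((c.re : ℝ) : ℂ) • a + ((c.im : ℝ) : ℂ) • (Complex.I • a) := by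
      rw [smul_smul, ← add_smul]
      congr 1
      simpa using (Complex.re_add_im c)
    rw [hdec, hTadd, hTreal, hTreal, hTI]
    have hfin : (c.re : ℂ) * T a + (c.im : ℂ) * (Complex.I * T a)
        = ((c.re : ℂ) + (c.im : ℂ) * Complex.I) * T a := by ring
    rw [hfin, Complex.re_add_im]
  have hTbound : ∀ a : A, ‖T a‖ ≤ (2 * ‖g‖) * ‖a‖ := by
    intro a
    have n1 : ‖(2⁻¹ : ℂ) • (a + star a)‖ ≤ ‖a‖ := by
      rw [norm_smul]
      calc ‖(2⁻¹ : ℂ)‖ * ‖a + star a‖ ≤ ‖(2⁻¹ : ℂ)‖ * (‖a‖ + ‖star a‖) :=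
            mul_le_mul_of_nonneg_left (norm_add_le _ _) (norm_nonneg _)
        _ = ‖a‖ := by rw [norm_star]; simp; ring
    have n2 : ‖(-(Complex.I)/2) • (a - star a)‖ ≤ ‖a‖ := by
      rw [norm_smul]
      calc ‖(-(Complex.I)/2 : ℂ)‖ * ‖a - star a‖ ≤ ‖(-(Complex.I)/2 : ℂ)‖ * (‖a‖ + ‖star a‖) :=
            mul_le_mul_of_nonneg_left (norm_sub_le _ _) (norm_nonneg _)
        _ = ‖a‖ := by rw [norm_star]; simp [norm_div]; ring
    have b1 : |g ((2⁻¹ : ℂ) • (a + star a))| ≤ ‖g‖ * ‖a‖ :=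
      le_trans (g.le_opNorm _) (mul_le_mul_of_nonneg_left n1 (norm_nonneg g))
    have b2 : |g ((-(Complex.I)/2) • (a - star a))| ≤ ‖g‖ * ‖a‖ :=
      le_trans (g.le_opNorm _) (mul_le_mul_of_nonneg_left n2 (norm_nonneg g))
    rw [hT]
    calc ‖((g ((2⁻¹ : ℂ) • (a + star a)) : ℝ) : ℂ)
          + Complex.I * ((g ((-(Complex.I)/2) • (a - star a)) : ℝ) : ℂ)‖
        ≤ ‖((g ((2⁻¹ : ℂ) • (a + star a)) : ℝ) : ℂ)‖
          + ‖Complex.I * ((g ((-(Complex.I)/2) • (a - star a)) : ℝ) : ℂ)‖ := norm_add_le _ _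
      _ = |g ((2⁻¹ : ℂ) • (a + star a))| + |g ((-(Complex.I)/2) • (a - star a))| := by
          rw [norm_mul, Complex.norm_I, one_mul, Complex.norm_real, Complex.norm_real]
          rfl
      _ ≤ ‖g‖ * ‖a‖ + ‖g‖ * ‖a‖ := add_le_add b1 b2
      _ = (2 * ‖g‖) * ‖a‖ := by ring
  set ψ : A →L[ℂ] ℂ := LinearMap.mkContinuous
    { toFun := T, map_add' := hTadd, map_smul' := fun c a => hTsmul c a } (2 * ‖g‖) hTbound
    with hψdef
  have hψapp : ∀ a, ψ a = T a := fun a => rfl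
  have hψpos : ∀ a : A, 0 ≤ a → 0 ≤ ψ a := by
    intro a ha
    have hasa : star a = a := (IsSelfAdjoint.of_nonneg ha).star_eq
    have e1 : (2⁻¹ : ℂ) • (a + star a) = a := by rw [hasa]; module
    have e2 : (-(Complex.I)/2) • (a - star a) = 0 := by rw [hasa]; module
    rw [hψapp, hT]
    simp only [e1, e2, map_zero]
    push_cast
    rw [mul_zero, add_zero]
    exact Complex.zero_le_real.mpr (hg0 a ha)
  have hψE : ∀ x ∈ E, ψ x = 0 := by
    intro x hx
    have m1 : (2⁻¹ : ℂ) • (x + star x) ∈ E := E.smul_mem _ (E.add_mem hx (hEstar x hx))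
    have m2 : (-(Complex.I)/2) • (x - star x) ∈ E :=
      E.smul_mem _ (E.sub_mem hx (hEstar x hx))
    rw [hψapp, hT]
    simp only [hgE _ m1, hgE _ m2]
    push_cast
    ring
  have := hsep ψ hψpos hψE
  have h1 : ψ 1 = 0 := by rw [this]; rfl
  simp only [hψapp, hT] at h1
  have e1 : (2⁻¹ : ℂ) • ((1:A) + star 1) = 1 := by rw [star_one]; module
  have e2 : (-(Complex.I)/2) • ((1:A) - star 1) = 0 := by rw [star_one]; module
  rw [e1, e2, map_zero] at h1
  simp only [Complex.ofReal_zero, mul_zero, add_zero] at h1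
  rw [Complex.ofReal_eq_zero] at h1
  linarith

lemma isClosed_posSet (A : Type*) [CStarAlgebra A] [PartialOrder A] [StarOrderedRing A] :
    IsClosed {ψ : WeakDual ℂ A | ∀ a : A, 0 ≤ a → 0 ≤ ψ a} := by
  have h1 : {ψ : WeakDual ℂ A | ∀ a : A, 0 ≤ a → 0 ≤ ψ a}
      = ⋂ (a : A) (_ : 0 ≤ a), (fun ψ : WeakDual ℂ A => ψ a) ⁻¹' {z : ℂ | 0 ≤ z} := by
    ext ψ
    simp [Set.mem_iInter]
  rw [h1]
  refine isClosed_iInter fun a => isClosed_iInter fun ha =>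
    IsClosed.preimage (WeakDual.eval_continuous a) ?_
  have h2 : {z : ℂ | 0 ≤ z} = Complex.re ⁻¹' (Set.Ici 0) ∩ Complex.im ⁻¹' {0} := by
    ext z
    simp [Complex.le_def, eq_comm]
  rw [h2]
  exact (isClosed_Ici.preimage Complex.continuous_re).inter
    (isClosed_singleton.preimage Complex.continuous_im)


end Aux

/-- **Lemma 4.3, scalar case.** Let `A` be a unital C*-algebra and `E ⊆ A` a
selfadjoint subspace generating `A` and separating for `A`.  Then the set of functionals on
`E` that extend to positive functionals on `A` is weak-* closed in the dual of `E`. -/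
theorem stmt_8 {A : Type*} [CStarAlgebra A] [PartialOrder A] [StarOrderedRing A]
    (E : Submodule ℂ A) (hEclosed : IsClosed (E : Set A)) (hEstar : ∀ x ∈ E, star x ∈ E)
    (hgen : (NonUnitalStarAlgebra.adjoin ℂ (E : Set A)).topologicalClosure = ⊤)
    (hsep : ∀ ψ : A →L[ℂ] ℂ, (∀ a : A, 0 ≤ a → 0 ≤ ψ a) → (∀ x ∈ E, ψ x = 0) → ψ = 0) :
    IsClosed {φ : WeakDual ℂ E | ∃ ψ : A →L[ℂ] ℂ,
      (∀ a : A, 0 ≤ a → 0 ≤ ψ a) ∧ ∀ (x : A) (hx : x ∈ E), ψ x = φ ⟨x, hx⟩} := by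
  classical
  set S := {φ : WeakDual ℂ E | ∃ ψ : A →L[ℂ] ℂ,
      (∀ a : A, 0 ≤ a → 0 ≤ ψ a) ∧ ∀ (x : A) (hx : x ∈ E), ψ x = φ ⟨x, hx⟩} with hSdef
  refine isClosed_of_closure_subset fun φ hφ => ?_
  obtain ⟨e, heE, hesa, ε, hε, hεe⟩ := exists_strict_pos E hEstar hsep
  obtain ⟨u, huS, hu⟩ := mem_closure_iff_ultrafilter.mp hφ
  have hch : ∀ φ' : WeakDual ℂ E, ∃ ψ : A →L[ℂ] ℂ, φ' ∈ S →
      (∀ a : A, 0 ≤ a → 0 ≤ ψ a) ∧ ∀ (x : A) (hx : x ∈ E), ψ x = φ' ⟨x, hx⟩ := by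
    intro φ'
    by_cases h : φ' ∈ S
    · obtain ⟨ψ, hψ⟩ := h
      exact ⟨ψ, fun _ => hψ⟩
    · exact ⟨0, fun hc => absurd hc h⟩
  choose Ψ hΨ using hch
  set Ψ' : WeakDual ℂ E → WeakDual ℂ A := fun φ' => StrongDual.toWeakDual (Ψ φ')
    with hΨ'def
  set R : ℝ := (‖φ ⟨e, heE⟩‖ + 1) / ε with hRdef
  have hR0 : 0 ≤ R := div_nonneg (by positivity) hε.le
  set K : Set (WeakDual ℂ A) := {ψ | ∀ a : A, 0 ≤ a → 0 ≤ ψ a}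
      ∩ (WeakDual.toStrongDual ⁻¹' Metric.closedBall 0 R) with hKdef
  have hKcompact : IsCompact K := by
    refine WeakDual.isCompact_of_bounded_of_closed ?_
      ((isClosed_posSet A).inter (WeakDual.isClosed_closedBall 0 R))
    exact Metric.isBounded_closedBall.subset (fun ψ hψ => hψ.2)
  -- the eventual bound
  have hT' : {φ' : WeakDual ℂ E | ‖φ' ⟨e, heE⟩ - φ ⟨e, heE⟩‖ < 1} ∈ u := by
    refine hu ?_
    have : {φ' : WeakDual ℂ E | ‖φ' ⟨e, heE⟩ - φ ⟨e, heE⟩‖ < 1}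
        = (fun φ' : WeakDual ℂ E => φ' ⟨e, heE⟩) ⁻¹' Metric.ball (φ ⟨e, heE⟩) 1 := by
      ext φ'
      simp [Metric.mem_ball, dist_eq_norm]
    rw [this]
    exact ((Metric.isOpen_ball).preimage (WeakDual.eval_continuous _)).mem_nhds
      (by simp [Metric.mem_ball])
  have hKmem : K ∈ Filter.map Ψ' (u : Filter (WeakDual ℂ E)) := by
    rw [Filter.mem_map]
    refine Filter.mem_of_superset (Filter.inter_mem huS hT') ?_
    rintro φ' ⟨hφ'S, hφ'T⟩
    obtain ⟨hpos, hext⟩ := hΨ φ' hφ'S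
    refine ⟨hpos, ?_⟩
    have h1 : ε * ((Ψ φ') 1).re ≤ ((Ψ φ') e).re := by
      have h2 := hpos _ (sub_nonneg.mpr hεe)
      rw [map_sub] at h2
      have h3 : (Ψ φ') (algebraMap ℝ A ε) = ((ε : ℝ) : ℂ) * (Ψ φ') 1 := by
        rw [IsScalarTower.algebraMap_apply ℝ ℂ A, Algebra.algebraMap_eq_smul_one, map_smul,
          smul_eq_mul, Complex.coe_algebraMap]
      rw [h3, Complex.le_def] at h2
      have := h2.1
      simp only [Complex.zero_re, Complex.sub_re, Complex.mul_re, Complex.ofReal_re,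
        Complex.ofReal_im] at this
      nlinarith [this]
    have h4 : ((Ψ φ') e).re ≤ ‖φ ⟨e, heE⟩‖ + 1 := by
      have h5 : (Ψ φ') e = φ' ⟨e, heE⟩ := hext e heE
      calc ((Ψ φ') e).re ≤ ‖(Ψ φ') e‖ := Complex.re_le_norm _
        _ = ‖φ ⟨e, heE⟩ + (φ' ⟨e, heE⟩ - φ ⟨e, heE⟩)‖ := by rw [h5]; congr 1; abel
        _ ≤ ‖φ ⟨e, heE⟩‖ + ‖φ' ⟨e, heE⟩ - φ ⟨e, heE⟩‖ := norm_add_le _ _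
        _ ≤ ‖φ ⟨e, heE⟩‖ + 1 := by
            have hφ'T2 : ‖φ' ⟨e, heE⟩ - φ ⟨e, heE⟩‖ < 1 := hφ'T
            linarith
    have h6 : ((Ψ φ') 1).re ≤ R := by
      rw [hRdef, le_div_iff₀ hε]
      have := pos_one_nonneg (Ψ φ') hpos
      nlinarith
    have h7 : ‖Ψ φ'‖ ≤ R := by
      refine ContinuousLinearMap.opNorm_le_bound _ hR0 fun a => ?_
      exact le_trans (pos_norm_bound (Ψ φ') hpos a)
        (mul_le_mul_of_nonneg_right h6 (norm_nonneg a))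
    exact mem_closedBall_zero_iff.mpr h7
  obtain ⟨ψL, hψK, hlim⟩ := hKcompact.ultrafilter_le_nhds (u.map Ψ')
    (by rw [Ultrafilter.coe_map]; exact Filter.le_principal_iff.mpr hKmem)
  refine ⟨WeakDual.toStrongDual ψL, hψK.1, fun x hx => ?_⟩
  have t1 : Filter.Tendsto Ψ' (u : Filter (WeakDual ℂ E)) (𝓝 ψL) := by
    rwa [Ultrafilter.coe_map] at hlim
  have t2 : Filter.Tendsto (fun φ' => Ψ' φ' x) (u : Filter (WeakDual ℂ E)) (𝓝 (ψL x)) :=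
    ((WeakDual.eval_continuous x).tendsto ψL).comp t1
  have t3 : Filter.Tendsto (fun φ' : WeakDual ℂ E => φ' ⟨x, hx⟩)
      (u : Filter (WeakDual ℂ E)) (𝓝 (φ ⟨x, hx⟩)) :=
    ((WeakDual.eval_continuous _).tendsto φ).mono_left hu
  have heq : (fun φ' => Ψ' φ' x) =ᶠ[(u : Filter (WeakDual ℂ E))]
      (fun φ' : WeakDual ℂ E => φ' ⟨x, hx⟩) :=
    Filter.eventually_of_mem huS (fun φ' hφ' => (hΨ φ' hφ').2 x hx)
  exact tendsto_nhds_unique t2 (Filter.Tendsto.congr' heq.symm t3)
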